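/- Sorted odd-even tree structure: in a sorted odd-even labeled tree T with vertices ordered v_1, ..., v_{r+1} (by the recursive order from splitting along edges), every odd-degree vertex precedes every even-degree vertex; i.e., if β_T(v_i) ≡ 1 (mod 2) and β_T(v_j) ≡ 0 (mod 2) then i < j. Moreover there exist integers r ≥ s_1 ≥ s_2 ≥ ... ≥ s_o = 0 (o the number of odd vertices) such that σ_T(v_i) = {star'_{s_i+1}, ..., star'_{s_{i-1}}} for 1 ≤ i ≤ o and σ_T(v_i) = ∅ for i > o. -/

import Mathlib

namespace SortedOEAux

open SimpleGraph

lemma aux_conn_card_lb {V : Type*} [Fintype V] (G : SimpleGraph V) [Fintype G.edgeSet]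
    (h : G.Connected) : Fintype.card V ≤ G.edgeFinset.card + 1 := by
  classical
  obtain ⟨root⟩ := h.nonempty
  have hpar : ∀ v : V, v ≠ root → ∃ u : V, G.Adj v u ∧ G.dist u root < G.dist v root := by
    intro v hv
    have hr : G.Reachable v root := h.preconnected v root
    obtain ⟨p, hp⟩ := hr.exists_walk_length_eq_dist
    have hpos : 0 < G.dist v root := h.pos_dist_of_ne hv
    cases p with
    | nil => simp at hp hpos <;> omega
    | cons hadj q =>
        refine ⟨_, hadj, ?_⟩
        have := G.dist_le q
        simp [Walk.length_cons] at hp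
        omega
  choose par hadj hdist using hpar
  have key : ∀ v ∈ (Finset.univ.erase root), (fun v : V =>
      if hv : v = root then s(root, root) else s(v, par v hv)) v ∈ G.edgeFinset := by
    intro v hv
    rw [Finset.mem_erase] at hv
    simp only []
    rw [dif_neg hv.1, SimpleGraph.mem_edgeFinset, SimpleGraph.mem_edgeSet]
    exact hadj v hv.1
  have hinj : ∀ v ∈ (Finset.univ.erase root), ∀ w ∈ (Finset.univ.erase root),
      (fun v : V => if hv : v = root then s(root, root) else s(v, par v hv)) v =
      (fun v : V => if hv : v = root then s(root, root) else s(v, par v hv)) w → v = w := by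
    intro v hv w hw hvw
    rw [Finset.mem_erase] at hv hw
    simp only [] at hvw
    rw [dif_neg hv.1, dif_neg hw.1, Sym2.eq_iff] at hvw
    rcases hvw with ⟨rfl, _⟩ | ⟨rfl, h2⟩
    · rfl
    · exfalso
      have h1 := hdist w hw.1
      have h2' := hdist (par w hw.1) hv.1
      rw [h2] at h2'
      omega
  have := Finset.card_le_card_of_injOn _ key hinj
  simp only [Finset.card_erase_of_mem (Finset.mem_univ root), Finset.card_univ] at this
  omega


lemma aux_initseg {n : ℕ} (S : Finset (Fin n))
    (hdc : ∀ x y : Fin n, x ≤ y → y ∈ S → x ∈ S) (v : Fin n) :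
    v ∈ S ↔ (v : ℕ) < S.card := by
  constructor
  · intro hv
    have hsub : Finset.Iic v ⊆ S := fun w hw => hdc w v (Finset.mem_Iic.mp hw) hv
    have := Finset.card_le_card hsub
    rw [Fin.card_Iic] at this
    omega
  · intro hv
    by_contra hns
    have hsub : S ⊆ Finset.Iio v := by
      intro w hw
      rw [Finset.mem_Iio]
      by_contra hlt
      exact hns (hdc v w (not_lt.mp hlt) hw)
    have := Finset.card_le_card hsub
    rw [Fin.card_Iio] at this
    omega


variable {r : ℕ}

/-- The full graph. -/
abbrev Gr (tail head : Fin r → Fin (r + 1)) : SimpleGraph (Fin (r + 1)) :=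
  SimpleGraph.fromRel (fun u w => ∃ a, tail a = u ∧ head a = w)

/-- The graph with edge `a` deleted. -/
abbrev Gd (tail head : Fin r → Fin (r + 1)) (a : Fin r) : SimpleGraph (Fin (r + 1)) :=
  SimpleGraph.fromRel (fun x y => ∃ c : Fin r, c ≠ a ∧ tail c = x ∧ head c = y)

lemma gd_adj {tail head : Fin r → Fin (r + 1)} {a c : Fin r} (hc : c ≠ a)
    (hloop : tail c ≠ head c) : (Gd tail head a).Adj (tail c) (head c) := by
  rw [SimpleGraph.fromRel_adj]
  exact ⟨hloop, Or.inl ⟨c, hc, rfl, rfl⟩⟩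

/-- transfer a full walk to `Gd a`, given the endpoints of `a` are reachable in `Gd a`. -/
lemma reach_all {tail head : Fin r → Fin (r + 1)} {a : Fin r}
    (hrc : (Gd tail head a).Reachable (tail a) (head a)) {u w : Fin (r + 1)}
    (hr : (Gr tail head).Reachable u w) : (Gd tail head a).Reachable u w := by
  obtain ⟨p⟩ := hr
  induction p with
  | nil => exact Reachable.refl _
  | @cons u' v' w' h q ih =>
    refine Reachable.trans ?_ ih
    rw [SimpleGraph.fromRel_adj] at h
    obtain ⟨hne, ⟨c, hc1, hc2⟩ | ⟨c, hc1, hc2⟩⟩ := h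
    · rcases eq_or_ne c a with rfl | hca
      · rw [← hc1, ← hc2]; exact hrc
      · subst hc1 hc2; exact (gd_adj hca hne).reachable
    · rcases eq_or_ne c a with rfl | hca
      · rw [← hc1, ← hc2]; exact hrc.symm
      · subst hc1 hc2; exact ((gd_adj hca hne.symm).reachable).symm

/-- dichotomy helper: extend a disjunction along a walk. -/
lemma walk_dich {tail head : Fin r → Fin (r + 1)} {a : Fin r}
    (hloop : ∀ c, tail c ≠ head c) {u w : Fin (r + 1)} (p : (Gr tail head).Walk u w)
    (hw : (Gd tail head a).Reachable w (tail a) ∨ (Gd tail head a).Reachable w (head a)) :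
    (Gd tail head a).Reachable u (tail a) ∨ (Gd tail head a).Reachable u (head a) := by
  induction p with
  | nil => exact hw
  | @cons u' v' w' h q ih =>
    have hv := ih hw
    rw [SimpleGraph.fromRel_adj] at h
    obtain ⟨hne, ⟨c, hc1, hc2⟩ | ⟨c, hc1, hc2⟩⟩ := h
    · rcases eq_or_ne c a with rfl | hca
      · exact Or.inl (hc1 ▸ Reachable.refl _)
      · subst hc1 hc2
        rcases hv with h' | h'
        · exact Or.inl ((gd_adj hca hne).reachable.trans h')
        · exact Or.inr ((gd_adj hca hne).reachable.trans h')
    · rcases eq_or_ne c a with rfl | hca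
      · exact Or.inr (hc2 ▸ Reachable.refl _)
      · subst hc1 hc2
        rcases hv with h' | h'
        · exact Or.inl (((gd_adj hca hne.symm).reachable.symm).trans h')
        · exact Or.inr (((gd_adj hca hne.symm).reachable.symm).trans h')

/-- every vertex reaches `tail a` or `head a` after deleting edge `a`. -/
lemma dich {tail head : Fin r → Fin (r + 1)} (hloop : ∀ c, tail c ≠ head c)
    (hconn : (Gr tail head).Connected) (a : Fin r) (v : Fin (r + 1)) :
    (Gd tail head a).Reachable v (tail a) ∨ (Gd tail head a).Reachable v (head a) := by
  obtain ⟨p⟩ := hconn.preconnected v (tail a)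
  exact walk_dich hloop p (Or.inl (Reachable.refl _))

/-- transfer a walk avoiding vertex `x` (an endpoint of `b`) to `Gd b`. -/
lemma walk_avoid {tail head : Fin r → Fin (r + 1)} {b : Fin r} {x : Fin (r + 1)}
    (hbx : tail b = x ∨ head b = x) {u w : Fin (r + 1)} (p : (Gr tail head).Walk u w)
    (hx : x ∉ p.support) : (Gd tail head b).Reachable u w := by
  induction p with
  | nil => exact Reachable.refl _
  | @cons u' v' w' h q ih =>
    rw [SimpleGraph.Walk.support_cons, List.mem_cons] at hx
    push_neg at hx
    obtain ⟨hxu, hxq⟩ := hx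
    have hxv : x ≠ v' := fun h' => (h' ▸ hxq) q.start_mem_support
    refine Reachable.trans ?_ (ih hxq)
    rw [SimpleGraph.fromRel_adj] at h
    obtain ⟨hne, ⟨c, hc1, hc2⟩ | ⟨c, hc1, hc2⟩⟩ := h
    · have hcb : c ≠ b := by
        rintro rfl
        rcases hbx with h' | h'
        · exact hxu (by rw [← h', hc1])
        · exact hxv (by rw [← h', hc2])
      subst hc1 hc2; exact (gd_adj hcb hne).reachable
    · have hcb : c ≠ b := by
        rintro rfl
        rcases hbx with h' | h'
        · exact hxv (by rw [← h', hc1])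
        · exact hxu (by rw [← h', hc2])
      subst hc1 hc2; exact ((gd_adj hcb hne.symm).reachable).symm

/-- each edge of the tree is a bridge. -/
lemma bridge {tail head : Fin r → Fin (r + 1)}
    (hconn : (Gr tail head).Connected) (a : Fin r) :
    ¬ (Gd tail head a).Reachable (tail a) (head a) := by
  intro hrc
  classical
  have hGd : (Gd tail head a).Connected :=
    SimpleGraph.Connected.mk (fun u w => reach_all hrc (hconn.preconnected u w))
  have hcard := aux_conn_card_lb (Gd tail head a) hGd
  have hsub : (Gd tail head a).edgeFinset ⊆
      (Finset.univ.erase a).image (fun c => s(tail c, head c)) := by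
    intro e
    induction e using Sym2.ind with
    | _ x y =>
      intro he
      rw [SimpleGraph.mem_edgeFinset, SimpleGraph.mem_edgeSet, SimpleGraph.fromRel_adj] at he
      obtain ⟨hne, ⟨c, hc1, hc2, hc3⟩ | ⟨c, hc1, hc2, hc3⟩⟩ := he
      · exact Finset.mem_image.mpr ⟨c, Finset.mem_erase.mpr ⟨hc1, Finset.mem_univ c⟩,
          by rw [hc2, hc3]⟩
      · exact Finset.mem_image.mpr ⟨c, Finset.mem_erase.mpr ⟨hc1, Finset.mem_univ c⟩,
          by rw [hc2, hc3, Sym2.eq_swap]⟩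
  have h1 : (Gd tail head a).edgeFinset.card ≤ r - 1 := by
    refine (Finset.card_le_card hsub).trans (Finset.card_image_le.trans ?_)
    rw [Finset.card_erase_of_mem (Finset.mem_univ a), Finset.card_univ, Fintype.card_fin]
  have h2 : 0 < r := a.pos
  rw [Fintype.card_fin] at hcard
  omega

/-- existence of a separating edge incident to `x`. -/
lemma exists_sep {tail head : Fin r → Fin (r + 1)}
    (hconn : (Gr tail head).Connected) {x y : Fin (r + 1)} (hxy : x ≠ y) :
    ∃ b : Fin r, ¬ (Gd tail head b).Reachable x y ∧ (tail b = x ∨ head b = x) := by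
  obtain ⟨w0⟩ := hconn.preconnected x y
  obtain ⟨p, hpath⟩ := w0.toPath
  cases p with
  | nil => exact absurd rfl hxy
  | @cons _ v₁ _ h q =>
    rw [SimpleGraph.Walk.cons_isPath_iff] at hpath
    obtain ⟨hq, hxs⟩ := hpath
    rw [SimpleGraph.fromRel_adj] at h
    obtain ⟨hne, ⟨b, hb1, hb2⟩ | ⟨b, hb1, hb2⟩⟩ := h
    · refine ⟨b, ?_, Or.inl hb1⟩
      intro hreach
      have hv1y : (Gd tail head b).Reachable v₁ y :=
        walk_avoid (Or.inl hb1) q hxs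
      have : (Gd tail head b).Reachable (tail b) (head b) := by
        rw [hb1, hb2]
        exact hreach.trans hv1y.symm
      exact bridge hconn b this
    · refine ⟨b, ?_, Or.inr hb2⟩
      intro hreach
      have hv1y : (Gd tail head b).Reachable v₁ y :=
        walk_avoid (Or.inr hb2) q hxs
      have : (Gd tail head b).Reachable (tail b) (head b) := by
        rw [hb1, hb2]
        exact (hreach.trans hv1y.symm).symm
      exact bridge hconn b this

/-- two tails of small edges are reachable avoiding a larger edge. -/
lemma reach_small {tail head : Fin r → Fin (r + 1)}
    (hsorted₁ : ∀ a b : Fin r, b ≤ a →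
      (SimpleGraph.fromRel
          (fun u w => ∃ c : Fin r, c ≤ a ∧ tail c = u ∧ head c = w)).Reachable
        (tail b) (tail a))
    {a b c : Fin r} (hb : b < a) (hc : c < a) :
    (Gd tail head a).Reachable (tail b) (tail c) := by
  set m := max b c with hm
  have hmono : (SimpleGraph.fromRel
      (fun u w => ∃ c' : Fin r, c' ≤ m ∧ tail c' = u ∧ head c' = w)) ≤ Gd tail head a := by
    intro u w hadj
    rw [SimpleGraph.fromRel_adj] at hadj ⊢
    obtain ⟨hne, ⟨c', h1, h2⟩ | ⟨c', h1, h2⟩⟩ := hadj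
    · exact ⟨hne, Or.inl ⟨c', ne_of_lt (lt_of_le_of_lt h1 (max_lt hb hc)), h2⟩⟩
    · exact ⟨hne, Or.inr ⟨c', ne_of_lt (lt_of_le_of_lt h1 (max_lt hb hc)), h2⟩⟩
  have h1 := (hsorted₁ m b (le_max_left b c)).mono hmono
  have h2 := (hsorted₁ m c (le_max_right b c)).mono hmono
  exact h1.trans h2.symm

end SortedOEAux


open SortedOEAux

/-- sorted odd-even tree structure.  A labeled tree with edge set
`Fin r` (edge `a` has tail `tail a`, carrying `star'_a ∈ σ(tail a)`, and head
`head a`) and vertex set `Fin (r+1)` indexed by the recursive order, with vertex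
degrees `β`.  The odd-even condition makes tails odd-degree and heads even-degree
vertices.  Sortedness: the edges `1,…,a` span a connected subgraph for each `a`, and
each `σ(v) = {a | tail a = v}` is an interval of edge labels.  The indexing by the
recursive order (splitting along the maximal edge puts the tail component first) is
characterized by: if `a` is the largest edge separating `u` from `w` and `u` lies on
the tail side of `a`, then `u` precedes `w`.

Conclusions: (1) every odd-degree vertex precedes every even-degree vertex; (2) with
`o` the number of odd vertices, there are integers `r = s₀ ≥ s₁ ≥ ⋯ ≥ s_o = 0` such
that `σ(v_i) = {star'_{s_i+1}, …, star'_{s_{i-1}}}` for the `i`-th odd vertex (in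
0-based indexing: `σ(v_i) = {a | s_{i+1} ≤ a < s_i}`, labels shifted by one), and
`σ(v_i) = ∅` for `i > o`. -/
theorem sorted_odd_even_tree_structure (r : ℕ)
    (tail head : Fin r → Fin (r + 1)) (β : Fin (r + 1) → ℕ)
    -- the underlying graph is a tree (connected, with `r` loop-free edges)
    (hloop : ∀ a, tail a ≠ head a)
    (hconn : (SimpleGraph.fromRel
        (fun u w => ∃ a, tail a = u ∧ head a = w)).Connected)
    -- odd-even: tails are odd-degree vertices, heads are even-degree vertices
    (hoe : ∀ a, β (tail a) % 2 = 1 ∧ β (head a) % 2 = 0)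
    -- every even-degree vertex has σ(v) = ∅ (is the tail of no edge)
    (heven : ∀ v, β v % 2 = 0 → ∀ a, tail a ≠ v)
    -- sorted (i): the subgraph spanned by the edges `≤ a` is connected
    (hsorted₁ : ∀ a b : Fin r, b ≤ a →
      (SimpleGraph.fromRel
          (fun u w => ∃ c : Fin r, c ≤ a ∧ tail c = u ∧ head c = w)).Reachable
        (tail b) (tail a))
    -- sorted (ii): each σ(v) is an interval of edge labels
    (hsorted₂ : ∀ i j c : Fin r, tail i = tail j → i ≤ c → c ≤ j →
      tail c = tail i)
    -- recursive order: if `a` is the largest edge separating `u` from `w` and `u`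
    -- lies in the tail-side component of `a`, then `u` comes before `w`
    (horder : ∀ (a : Fin r) (u w : Fin (r + 1)),
      ¬ (SimpleGraph.fromRel
          (fun x y => ∃ c : Fin r, c ≠ a ∧ tail c = x ∧ head c = y)).Reachable u w →
      (∀ b : Fin r, a < b →
        (SimpleGraph.fromRel
            (fun x y => ∃ c : Fin r, c ≠ b ∧ tail c = x ∧ head c = y)).Reachable u w) →
      (SimpleGraph.fromRel
          (fun x y => ∃ c : Fin r, c ≠ a ∧ tail c = x ∧ head c = y)).Reachable
        u (tail a) →
      u < w) :
    -- (1) odd-degree vertices precede even-degree vertices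
    (∀ u w : Fin (r + 1), β u % 2 = 1 → β w % 2 = 0 → u < w)
    -- (2) the σ's of the odd vertices are successive intervals of labels
    ∧ ∃ s : ℕ → ℕ,
        s 0 = r ∧ (∀ i, s (i + 1) ≤ s i)
        ∧ s ((Finset.univ.filter (fun v : Fin (r + 1) => β v % 2 = 1)).card) = 0
        ∧ (∀ v : Fin (r + 1),
            (v : ℕ) < (Finset.univ.filter (fun v : Fin (r + 1) => β v % 2 = 1)).card →
            Finset.univ.filter (fun a : Fin r => tail a = v)
              = Finset.univ.filter
                  (fun a : Fin r => s ((v : ℕ) + 1) ≤ (a : ℕ) ∧ (a : ℕ) < s (v : ℕ)))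
        ∧ (∀ v : Fin (r + 1),
            (Finset.univ.filter (fun v : Fin (r + 1) => β v % 2 = 1)).card ≤ (v : ℕ) →
            Finset.univ.filter (fun a : Fin r => tail a = v) = ∅) := by
  have maxSep : ∀ x y : Fin (r + 1), x ≠ y →
      ∃ a : Fin r, ¬ (Gd tail head a).Reachable x y ∧
        (∀ b : Fin r, a < b → (Gd tail head b).Reachable x y) ∧
        (∀ b : Fin r, ¬ (Gd tail head b).Reachable x y → b ≤ a) := by
    intro x y hxy
    classical
    set S := Finset.univ.filter (fun b : Fin r => ¬ (Gd tail head b).Reachable x y) with hS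
    have hSne : S.Nonempty := by
      obtain ⟨b, hb, _⟩ := exists_sep hconn hxy
      exact ⟨b, by simp [hS, hb]⟩
    refine ⟨S.max' hSne, ?_, ?_, ?_⟩
    · have := S.max'_mem hSne
      simp only [hS, Finset.mem_filter] at this
      exact this.2
    · intro b hb
      by_contra hreach
      exact absurd (S.le_max' b (by simp [hS, hreach])) (not_le.mpr hb)
    · intro b hb
      exact S.le_max' b (by simp [hS, hb])
  have hdich := dich hloop hconn
  -- Part (1)
  have K1 : ∀ u w : Fin (r + 1), β u % 2 = 1 → β w % 2 = 0 → u < w := by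
    intro u w hu hw
    have hne : u ≠ w := by intro h; rw [h] at hu; omega
    obtain ⟨a, hsep, hmax, hle⟩ := maxSep u w hne
    have hut : (Gd tail head a).Reachable u (tail a) := by
      by_contra hut
      have huh : (Gd tail head a).Reachable u (head a) := (hdich a u).resolve_left hut
      obtain ⟨b₁, hb₁s, hb₁i⟩ := exists_sep hconn hne
      have hb₁t : tail b₁ = u := by
        rcases hb₁i with h | h
        · exact h
        · exfalso; have := (hoe b₁).2; rw [h, hu] at this; omega
      have hb₁a : b₁ < a := by
        rcases lt_or_eq_of_le (hle b₁ hb₁s) with h | h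
        · exact h
        · exfalso
          exact hut (by rw [← h, hb₁t])
      obtain ⟨b₂, hb₂s, hb₂i⟩ := exists_sep hconn (Ne.symm hne)
      have hb₂s' : ¬ (Gd tail head b₂).Reachable u w := fun h => hb₂s h.symm
      have hb₂t : head b₂ = w := by
        rcases hb₂i with h | h
        · exact absurd h (heven w hw b₂)
        · exact h
      have hb₂a : b₂ < a := by
        rcases lt_or_eq_of_le (hle b₂ hb₂s') with h | h
        · exact h
        · exfalso
          refine hsep ?_
          rw [← hb₂t, h]
          exact huh
      have h3 := reach_small hsorted₁ hb₁a hb₂a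
      have h4 := (gd_adj (ne_of_lt hb₂a) (hloop b₂)).reachable
      refine hsep ?_
      rw [← hb₁t, ← hb₂t]
      exact h3.trans h4
    exact horder a u w hsep hmax hut
  -- Part (2) key: tails are antitone in the edge label
  have K2 : ∀ c d : Fin r, c < d → tail d ≤ tail c := by
    intro c d hcd
    by_contra hcon
    push_neg at hcon
    have hne : tail c ≠ tail d := ne_of_lt hcon
    obtain ⟨a, hsep, hmax, hle⟩ := maxSep (tail c) (tail d) hne
    have hyt : ¬ (Gd tail head a).Reachable (tail d) (tail a) := by
      intro h
      have := horder a (tail d) (tail c) (fun hr => hsep hr.symm)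
        (fun b hb => ((hmax b hb).symm)) h
      exact absurd this (not_lt.mpr hcon.le)
    have hyh : (Gd tail head a).Reachable (tail d) (head a) :=
      (hdich a (tail d)).resolve_left hyt
    have hxt : (Gd tail head a).Reachable (tail c) (tail a) := by
      rcases hdich a (tail c) with h | h
      · exact h
      · exact absurd (h.trans hyh.symm) hsep
    obtain ⟨b₁, hb₁s, hb₁i⟩ := exists_sep hconn (Ne.symm hne)
    have hb₁s' : ¬ (Gd tail head b₁).Reachable (tail c) (tail d) := fun h => hb₁s h.symm
    have hb₁t : tail b₁ = tail d := by
      rcases hb₁i with h | h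
      · exact h
      · exfalso
        have h1 := (hoe b₁).2
        have h2 := (hoe d).1
        rw [h] at h1
        omega
    have hb₁a : b₁ < a := by
      rcases lt_or_eq_of_le (hle b₁ hb₁s') with h | h
      · exact h
      · exfalso
        exact hyt (by rw [← h, hb₁t])
    have hxa : tail a = tail c := by
      by_contra hxta
      obtain ⟨b₂, hb₂s, hb₂i⟩ := exists_sep hconn hne
      have hb₂t : tail b₂ = tail c := by
        rcases hb₂i with h | h
        · exact h
        · exfalso
          have h1 := (hoe b₂).2
          have h2 := (hoe c).1
          rw [h] at h1
          omega
      have hb₂a : b₂ < a := by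
        rcases lt_or_eq_of_le (hle b₂ hb₂s) with h | h
        · exact h
        · exfalso
          exact hxta (by rw [← h]; exact hb₂t)
      refine hsep ?_
      rw [← hb₂t, ← hb₁t]
      exact reach_small hsorted₁ hb₂a hb₁a
    have hda : d < a := by
      rcases lt_or_ge d a with h | h
      · exact h
      · exfalso
        have hthis := hsorted₂ b₁ d a hb₁t hb₁a.le h
        rw [hb₁t] at hthis
        exact hne (hxa.symm.trans hthis)
    have hca : a ≤ c := by
      by_contra hca
      push_neg at hca
      refine hsep ?_
      rw [← hb₁t]
      exact reach_small hsorted₁ hca hb₁a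
    exact absurd (hda.trans_le hca) (not_lt.mpr hcd.le)
  refine ⟨K1, ?_⟩
  set O := Finset.univ.filter (fun v : Fin (r + 1) => β v % 2 = 1) with hO
  have hdcO : ∀ x y : Fin (r + 1), x ≤ y → y ∈ O → x ∈ O := by
    intro x y hxy hy
    rw [hO, Finset.mem_filter] at hy ⊢
    refine ⟨Finset.mem_univ x, ?_⟩
    by_contra hx
    have hx0 : β x % 2 = 0 := by omega
    exact absurd (K1 y x hy.2 hx0) (not_lt.mpr hxy)
  have hOiff : ∀ v : Fin (r + 1), β v % 2 = 1 ↔ (v : ℕ) < O.card := by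
    intro v
    rw [← aux_initseg O hdcO v, hO, Finset.mem_filter]
    simp
  have hanti : ∀ a b : Fin r, a ≤ b → (tail b : ℕ) ≤ (tail a : ℕ) := by
    intro a b hab
    rcases lt_or_eq_of_le hab with h | h
    · exact K2 a b h
    · rw [h]
  have hfact : ∀ (t : ℕ) (a : Fin r), t ≤ (tail a : ℕ) ↔
      (a : ℕ) < (Finset.univ.filter (fun a : Fin r => t ≤ (tail a : ℕ))).card := by
    intro t a
    have hdc : ∀ x y : Fin r, x ≤ y →
        y ∈ Finset.univ.filter (fun a : Fin r => t ≤ (tail a : ℕ)) →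
        x ∈ Finset.univ.filter (fun a : Fin r => t ≤ (tail a : ℕ)) := by
      intro x y hxy hy
      rw [Finset.mem_filter] at hy ⊢
      refine ⟨Finset.mem_univ x, ?_⟩
      have := hanti x y hxy
      omega
    rw [← aux_initseg _ hdc a, Finset.mem_filter]
    simp
  refine ⟨fun i => (Finset.univ.filter (fun a : Fin r => i ≤ (tail a : ℕ))).card,
    ?_, ?_, ?_, ?_, ?_⟩
  · simp
  · intro i
    apply Finset.card_le_card
    intro a ha
    rw [Finset.mem_filter] at ha ⊢
    exact ⟨ha.1, by omega⟩
  · rw [Finset.card_eq_zero, Finset.filter_eq_empty_iff]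
    intro a _
    have := (hoe a).1
    rw [hOiff] at this
    omega
  · intro v hv
    ext a
    simp only [Finset.mem_filter, Finset.mem_univ, true_and]
    have hfv := hfact (v : ℕ) a
    have hfv1 := hfact ((v : ℕ) + 1) a
    constructor
    · intro h
      rw [h] at hfv hfv1
      refine ⟨?_, hfv.mp (le_refl _)⟩
      by_contra hh
      push_neg at hh
      have := hfv1.mpr hh
      omega
    · rintro ⟨h1, h2⟩
      have hv1 : (v : ℕ) ≤ (tail a : ℕ) := hfv.mpr h2
      have hv2 : ¬ ((v : ℕ) + 1 ≤ (tail a : ℕ)) := by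
        intro hh
        have := hfv1.mp hh
        omega
      exact Fin.ext (by omega)
  · intro v hv
    rw [Finset.filter_eq_empty_iff]
    intro a _
    intro h
    have := (hoe a).1
    rw [hOiff, h] at this
    omega
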